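/- Suppose (x₀,y₀) ∈ ℝ² satisfies x₀ ≥ 0 and y₀ > −1 (so (x₀,y₀) is a real point of R₋ at which f⁻¹ is defined). Then (x₋₁,y₋₁) := f⁻¹(x₀,y₀) is a point of ℝ² lying in R₋, i.e. x₋₁ ≥ 0 and y₋₁ ≥ −1, and moreover max{x₋₁, y₋₁ + 1} ≥ max{x₀, y₀ + 1} + 1. -/
import Mathlib

open Filter

/-- The birational map f(x,y) = (y(x+a)/(x-1), x+a-1). -/
noncomputable def birat (a : ℝ) (p : ℝ × ℝ) : ℝ × ℝ :=
  (p.2 * (p.1 + a) / (p.1 - 1), p.1 + a - 1)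

/-- The inverse map f⁻¹(x,y) = (y+1-a, x(y-a)/(y+1)). -/
noncomputable def biratInv (a : ℝ) (p : ℝ × ℝ) : ℝ × ℝ :=
  (p.2 + 1 - a, p.1 * (p.2 - a) / (p.2 + 1))

/-- The forward orbit of `p` is defined up to time `n`. -/
def orbitDefined (a : ℝ) (p : ℝ × ℝ) (n : ℕ) : Prop :=
  ∀ k < n, ((birat a)^[k] p).1 ≠ 1

def Rplus : Set (ℝ × ℝ) := {p | p.1 ≤ 1 ∧ p.2 ≤ 0}
def Rminus : Set (ℝ × ℝ) := {p | 0 ≤ p.1 ∧ -1 ≤ p.2}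
def Rzero : Set (ℝ × ℝ) := {p | 1 ≤ p.1 ∧ p.2 ≤ -1}
def Rone : Set (ℝ × ℝ) := {p | p.1 ≤ 0 ∧ 0 ≤ p.2}
def intRplus : Set (ℝ × ℝ) := {p | p.1 < 1 ∧ p.2 < 0}
def intRzero : Set (ℝ × ℝ) := {p | 1 < p.1 ∧ p.2 < -1}
def intRone : Set (ℝ × ℝ) := {p | p.1 < 0 ∧ 0 < p.2}

/-- `Rw 0 = R₀`, `Rw 1 = R₁`. -/
def Rw (i : Fin 2) : Set (ℝ × ℝ) := if i = 0 then Rzero else Rone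

/-- `intRw 0 = int R₀`, `intRw 1 = int R₁`. -/
def intRw (i : Fin 2) : Set (ℝ × ℝ) := if i = 0 then intRzero else intRone

/-- Euclidean distance on ℝ². -/
noncomputable def eucDist (p q : ℝ × ℝ) : ℝ :=
  Real.sqrt ((p.1 - q.1) ^ 2 + (p.2 - q.2) ^ 2)

theorem stmt1 (a : ℝ) (ha : a < -1) (x0 y0 : ℝ) (hx : 0 ≤ x0) (hy : -1 < y0) :
    0 ≤ (biratInv a (x0, y0)).1 ∧ -1 ≤ (biratInv a (x0, y0)).2 ∧
    max x0 (y0 + 1) + 1 ≤ max (biratInv a (x0, y0)).1 ((biratInv a (x0, y0)).2 + 1) := by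
  simp only [biratInv]
  have hd : 0 < y0 + 1 := by linarith
  have hsec : x0 ≤ x0 * (y0 - a) / (y0 + 1) := by
    rw [le_div_iff₀ hd]
    nlinarith
  have hsec0 : 0 ≤ x0 * (y0 - a) / (y0 + 1) := le_trans hx hsec
  refine ⟨by linarith, by linarith, ?_⟩
  have h1 : x0 + 1 ≤ x0 * (y0 - a) / (y0 + 1) + 1 := by linarith
  have h2 : y0 + 1 + 1 ≤ y0 + 1 - a := by linarith
  rcases le_total x0 (y0 + 1) with h | h
  · rw [max_eq_right h]
    exact le_max_of_le_left h2
  · rw [max_eq_left h]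
    exact le_max_of_le_right h1
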